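/- Let T(z) = (1−w) z + w z_in − h ∇f(z) where f(z) = ‖z − z₀‖²/(2σ²) + ‖Pz − y‖²/(2m²), P Pᵀ = I, and parameters w ∈ [0,1), h > 0, σ, m > 0 satisfy h(1/σ² + 1/m²) + w < 2. Then T is a contraction on ℝ^p with respect to the Euclidean norm. -/

import Mathlib

set_option maxHeartbeats 1000000


/-- The update map T(z) = (1−w)z + w z_in − h∇f(z), with
f(z) = ‖z−z₀‖²/(2σ²) + ‖Pz−y‖²/(2m²) and P Pᵀ = I, is a contraction on ℝᵖ when
h(1/σ² + 1/m²) + w < 2. -/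
theorem stmt11 {k p : ℕ}
    (P : EuclideanSpace ℝ (Fin p) →L[ℝ] EuclideanSpace ℝ (Fin k))
    (hP : P ∘L ContinuousLinearMap.adjoint P
        = ContinuousLinearMap.id ℝ (EuclideanSpace ℝ (Fin k)))
    (z₀ zin : EuclideanSpace ℝ (Fin p)) (y : EuclideanSpace ℝ (Fin k))
    (w h σ m : ℝ) (hw : w ∈ Set.Ico (0:ℝ) 1) (hh : 0 < h) (hσ : 0 < σ)
    (hm : 0 < m) (hcond : h * (1 / σ ^ 2 + 1 / m ^ 2) + w < 2) :
    ∃ K : NNReal, K < 1 ∧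
      LipschitzWith K
        (fun z : EuclideanSpace ℝ (Fin p) =>
          (1 - w) • z + w • zin
            - h • ((σ ^ 2)⁻¹ • (z - z₀)
              + (m ^ 2)⁻¹ • (ContinuousLinearMap.adjoint P) (P z - y))) := by
  obtain ⟨hw0, hw1⟩ := hw
  set a : ℝ := 1 - w - h * (σ ^ 2)⁻¹ with ha
  set b : ℝ := h * (m ^ 2)⁻¹ with hb
  have hσ2 : (0:ℝ) < (σ ^ 2)⁻¹ := by positivity
  have hm2 : (0:ℝ) < (m ^ 2)⁻¹ := by positivity
  have hb0 : 0 < b := by positivity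
  have hcond' : h * (σ ^ 2)⁻¹ + h * (m ^ 2)⁻¹ + w < 2 := by
    have : h * (1 / σ ^ 2 + 1 / m ^ 2) = h * (σ ^ 2)⁻¹ + h * (m ^ 2)⁻¹ := by ring
    linarith [this ▸ hcond]
  have ha1 : |a| < 1 := by
    rw [abs_lt, ha]
    constructor <;> nlinarith [mul_pos hh hσ2, mul_pos hh hm2]
  have hab1 : |a - b| < 1 := by
    rw [abs_lt, ha, hb]
    constructor <;> nlinarith [mul_pos hh hσ2, mul_pos hh hm2]
  set K0 : ℝ := max |a| |a - b| with hK0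
  have hK0nn : 0 ≤ K0 := le_trans (abs_nonneg a) (le_max_left _ _)
  refine ⟨⟨K0, hK0nn⟩, ?_, ?_⟩
  · exact_mod_cast max_lt ha1 hab1
  · apply LipschitzWith.of_dist_le_mul
    intro x z
    simp only [dist_eq_norm]
    set v := x - z with hv
    have hsplit : ((1 - w) • x + w • zin
            - h • ((σ ^ 2)⁻¹ • (x - z₀)
              + (m ^ 2)⁻¹ • (ContinuousLinearMap.adjoint P) (P x - y)))
        - ((1 - w) • z + w • zin
            - h • ((σ ^ 2)⁻¹ • (z - z₀)
              + (m ^ 2)⁻¹ • (ContinuousLinearMap.adjoint P) (P z - y)))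
        = a • v - b • (ContinuousLinearMap.adjoint P) (P v) := by
      simp only [hv, map_sub, ha, hb]
      module
    rw [hsplit]
    -- now bound the norm
    set Q := (ContinuousLinearMap.adjoint P) (P v) with hQ
    set t : ℝ := inner ℝ v Q with ht
    have hPid : ∀ u : EuclideanSpace ℝ (Fin k),
        P ((ContinuousLinearMap.adjoint P) u) = u := by
      intro u
      have := ContinuousLinearMap.ext_iff.mp hP u
      simpa using this
    have htP : t = inner ℝ (P v) (P v) := by
      rw [ht, hQ, real_inner_comm, ContinuousLinearMap.adjoint_inner_left]
    have ht0 : 0 ≤ t := htP ▸ real_inner_self_nonneg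
    have hQQ : (inner ℝ Q Q : ℝ) = t := by
      rw [hQ, ContinuousLinearMap.adjoint_inner_left, hPid, ← htP]
    have hQn : ‖Q‖ ^ 2 = t := by
      rw [← real_inner_self_eq_norm_sq, hQQ]
    have hts : t ≤ ‖v‖ ^ 2 := by
      have h1 : t ≤ ‖v‖ * ‖Q‖ := ht ▸ real_inner_le_norm v Q
      nlinarith [norm_nonneg Q, norm_nonneg v, sq_nonneg (‖v‖ - ‖Q‖)]
    have hsq : ‖a • v - b • Q‖ ^ 2 ≤ (K0 * ‖v‖) ^ 2 := by
      have hexp : ‖a • v - b • Q‖ ^ 2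
          = a ^ 2 * ‖v‖ ^ 2 - 2 * (a * b) * t + b ^ 2 * t := by
        rw [@norm_sub_sq_real, real_inner_smul_left, real_inner_smul_right, ← ht]
        simp only [norm_smul, Real.norm_eq_abs, mul_pow, sq_abs, hQn]
        ring
      rw [hexp]
      have hmax1 : a ^ 2 ≤ K0 ^ 2 := by
        have := le_max_left |a| |a - b|
        nlinarith [abs_nonneg a, sq_abs a]
      have hmax2 : (a - b) ^ 2 ≤ K0 ^ 2 := by
        have := le_max_right |a| |a - b|
        nlinarith [abs_nonneg (a - b), sq_abs (a - b)]
      rcases le_or_gt (b ^ 2 - 2 * (a * b)) 0 with hc | hc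
      · nlinarith [sq_nonneg ‖v‖]
      · nlinarith [sq_nonneg ‖v‖]
    have : ‖a • v - b • Q‖ ≤ K0 * ‖v‖ := by
      have := Real.sqrt_le_sqrt hsq
      rwa [Real.sqrt_sq (norm_nonneg _), Real.sqrt_sq (by positivity)] at this
    exact this
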